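/- Let u^A, u^a : ℝ → ℝ be nonnegative functions with a common zero z* (u^A(z*) = u^a(z*) = 0), satisfying the infinitesimal-model constraints: (i) for all z, z1, z2 ∈ ℝ, u^A(z) ≤ (z − (z1+z2)/2)² + u^A(z1) + u^A(z2) and u^A(z) ≤ (z − (z1+z2)/2)² + u^A(z1) + u^a(z2), with, for every z and ε > 0, some z1, z2 making at least one of these right-hand sides smaller than u^A(z) + ε; and (ii) the symmetric constraints for u^a with right-hand sides (z − (z1+z2)/2)² + u^a(z1) + u^a(z2) and (z − (z1+z2)/2)² + u^A(z1) + u^a(z2). Suppose moreover that the Legendre-type conjugates û^A(y) := sup_{z∈ℝ} ((z − z*)·y − u^A(z)) and û^a(y) := sup_{z∈ℝ} ((z − z*)·y − u^a(z)) are finite for every y ∈ ℝ. Then for all y ∈ ℝ: û^A(y) = max( y²/4 + 2·û^A(y/2), y²/4 + û^A(y/2) + û^a(y/2) ) and û^a(y) = max( y²/4 + 2·û^a(y/2), y²/4 + û^a(y/2) + û^A(y/2) ). -/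

import Mathlib

lemma conj_eq_aux (u v : ℝ → ℝ) (zs y : ℝ)
    (h1 : ∀ z z1 z2 : ℝ, u z ≤ (z - (z1 + z2) / 2) ^ 2 + u z1 + u z2)
    (h2 : ∀ z z1 z2 : ℝ, u z ≤ (z - (z1 + z2) / 2) ^ 2 + u z1 + v z2)
    (h3 : ∀ z : ℝ, ∀ ε > 0, ∃ z1 z2 : ℝ,
      (z - (z1 + z2) / 2) ^ 2 + u z1 + u z2 < u z + ε ∨
      (z - (z1 + z2) / 2) ^ 2 + u z1 + v z2 < u z + ε)
    (hbu : ∀ y : ℝ, BddAbove (Set.range fun z => (z - zs) * y - u z))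
    (hbv : ∀ y : ℝ, BddAbove (Set.range fun z => (z - zs) * y - v z)) :
    sSup (Set.range fun z => (z - zs) * y - u z) =
      max (y ^ 2 / 4 + 2 * sSup (Set.range fun z => (z - zs) * (y / 2) - u z))
        (y ^ 2 / 4 + sSup (Set.range fun z => (z - zs) * (y / 2) - u z)
          + sSup (Set.range fun z => (z - zs) * (y / 2) - v z)) := by
  set Su := sSup (Set.range fun z => (z - zs) * y - u z) with hSu
  set Fu := sSup (Set.range fun z => (z - zs) * (y / 2) - u z) with hFu
  set Fv := sSup (Set.range fun z => (z - zs) * (y / 2) - v z) with hFv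
  have hne : ∀ f : ℝ → ℝ, (Set.range f).Nonempty := fun f => Set.range_nonempty f
  have leSu : ∀ z, (z - zs) * y - u z ≤ Su := fun z =>
    le_csSup (hbu y) ⟨z, rfl⟩
  have leFu : ∀ z, (z - zs) * (y / 2) - u z ≤ Fu := fun z =>
    le_csSup (hbu (y / 2)) ⟨z, rfl⟩
  have leFv : ∀ z, (z - zs) * (y / 2) - v z ≤ Fv := fun z =>
    le_csSup (hbv (y / 2)) ⟨z, rfl⟩
  -- elementwise lower bounds for Su
  have keyA : ∀ z1 z2 : ℝ, y ^ 2 / 4 + ((z1 - zs) * (y / 2) - u z1)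
      + ((z2 - zs) * (y / 2) - u z2) ≤ Su := by
    intro z1 z2
    have hz := h1 ((z1 + z2) / 2 + y / 2) z1 z2
    have hs := leSu ((z1 + z2) / 2 + y / 2)
    nlinarith [hz, hs]
  have keyB : ∀ z1 z2 : ℝ, y ^ 2 / 4 + ((z1 - zs) * (y / 2) - u z1)
      + ((z2 - zs) * (y / 2) - v z2) ≤ Su := by
    intro z1 z2
    have hz := h2 ((z1 + z2) / 2 + y / 2) z1 z2
    have hs := leSu ((z1 + z2) / 2 + y / 2)
    nlinarith [hz, hs]
  -- sup manipulation: y²/4 + 2Fu ≤ Su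
  have hA : y ^ 2 / 4 + 2 * Fu ≤ Su := by
    have step1 : ∀ z1, Fu ≤ Su - y ^ 2 / 4 - ((z1 - zs) * (y / 2) - u z1) := by
      intro z1
      apply csSup_le (hne _)
      rintro x ⟨z2, rfl⟩
      have := keyA z1 z2
      linarith
    have step2 : Fu ≤ Su - y ^ 2 / 4 - Fu := by
      apply csSup_le (hne _)
      rintro x ⟨z1, rfl⟩
      have := step1 z1
      linarith
    linarith
  have hB : y ^ 2 / 4 + Fu + Fv ≤ Su := by
    have step1 : ∀ z1, Fv ≤ Su - y ^ 2 / 4 - ((z1 - zs) * (y / 2) - u z1) := by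
      intro z1
      apply csSup_le (hne _)
      rintro x ⟨z2, rfl⟩
      have := keyB z1 z2
      linarith
    have step2 : Fu ≤ Su - y ^ 2 / 4 - Fv := by
      apply csSup_le (hne _)
      rintro x ⟨z1, rfl⟩
      have := step1 z1
      linarith
    linarith
  have hle : Su ≤ max (y ^ 2 / 4 + 2 * Fu) (y ^ 2 / 4 + Fu + Fv) := by
    apply le_of_forall_pos_le_add
    intro ε hε
    apply csSup_le (hne _)
    rintro x ⟨z, rfl⟩
    obtain ⟨z1, z2, hc⟩ := h3 z ε hε
    have hsq : (z - zs) * y - (z - (z1 + z2) / 2) ^ 2 ≤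
        y ^ 2 / 4 + (z1 - zs) * (y / 2) + (z2 - zs) * (y / 2) := by
      nlinarith [sq_nonneg (z - (z1 + z2) / 2 - y / 2)]
    rcases hc with h | h
    · have h1' := leFu z1
      have h2' := leFu z2
      have : (z - zs) * y - u z ≤ y ^ 2 / 4 + 2 * Fu + ε := by linarith
      calc (z - zs) * y - u z ≤ y ^ 2 / 4 + 2 * Fu + ε := this
        _ ≤ max (y ^ 2 / 4 + 2 * Fu) (y ^ 2 / 4 + Fu + Fv) + ε := by
            exact add_le_add (le_max_left _ _) le_rfl
    · have h1' := leFu z1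
      have h2' := leFv z2
      have : (z - zs) * y - u z ≤ y ^ 2 / 4 + Fu + Fv + ε := by linarith
      calc (z - zs) * y - u z ≤ y ^ 2 / 4 + Fu + Fv + ε := this
        _ ≤ max (y ^ 2 / 4 + 2 * Fu) (y ^ 2 / 4 + Fu + Fv) + ε := by
            exact add_le_add (le_max_right _ _) le_rfl
  exact le_antisymm hle (max_le hA hB)

theorem stmt_4 (uA ua : ℝ → ℝ) (zs : ℝ)
    (hAnn : ∀ z, 0 ≤ uA z) (hann : ∀ z, 0 ≤ ua z)
    (hAz : uA zs = 0) (haz : ua zs = 0)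
    (hA1 : ∀ z z1 z2 : ℝ, uA z ≤ (z - (z1 + z2) / 2) ^ 2 + uA z1 + uA z2)
    (hA2 : ∀ z z1 z2 : ℝ, uA z ≤ (z - (z1 + z2) / 2) ^ 2 + uA z1 + ua z2)
    (hA3 : ∀ z : ℝ, ∀ ε > 0, ∃ z1 z2 : ℝ,
      (z - (z1 + z2) / 2) ^ 2 + uA z1 + uA z2 < uA z + ε ∨
      (z - (z1 + z2) / 2) ^ 2 + uA z1 + ua z2 < uA z + ε)
    (ha1 : ∀ z z1 z2 : ℝ, ua z ≤ (z - (z1 + z2) / 2) ^ 2 + ua z1 + ua z2)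
    (ha2 : ∀ z z1 z2 : ℝ, ua z ≤ (z - (z1 + z2) / 2) ^ 2 + uA z1 + ua z2)
    (ha3 : ∀ z : ℝ, ∀ ε > 0, ∃ z1 z2 : ℝ,
      (z - (z1 + z2) / 2) ^ 2 + ua z1 + ua z2 < ua z + ε ∨
      (z - (z1 + z2) / 2) ^ 2 + uA z1 + ua z2 < ua z + ε)
    (hbA : ∀ y : ℝ, BddAbove (Set.range fun z => (z - zs) * y - uA z))
    (hba : ∀ y : ℝ, BddAbove (Set.range fun z => (z - zs) * y - ua z)) :
    ∀ y : ℝ,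
      sSup (Set.range fun z => (z - zs) * y - uA z) =
        max (y ^ 2 / 4 + 2 * sSup (Set.range fun z => (z - zs) * (y / 2) - uA z))
          (y ^ 2 / 4 + sSup (Set.range fun z => (z - zs) * (y / 2) - uA z)
            + sSup (Set.range fun z => (z - zs) * (y / 2) - ua z)) ∧
      sSup (Set.range fun z => (z - zs) * y - ua z) =
        max (y ^ 2 / 4 + 2 * sSup (Set.range fun z => (z - zs) * (y / 2) - ua z))
          (y ^ 2 / 4 + sSup (Set.range fun z => (z - zs) * (y / 2) - ua z)
            + sSup (Set.range fun z => (z - zs) * (y / 2) - uA z)) := by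
  intro y
  constructor
  · exact conj_eq_aux uA ua zs y hA1 hA2 hA3 hbA hba
  · have ha2' : ∀ z z1 z2 : ℝ, ua z ≤ (z - (z1 + z2) / 2) ^ 2 + ua z1 + uA z2 := by
      intro z z1 z2
      have h := ha2 z z2 z1
      have he : (z - (z2 + z1) / 2) ^ 2 = (z - (z1 + z2) / 2) ^ 2 := by ring
      linarith
    have ha3' : ∀ z : ℝ, ∀ ε > 0, ∃ z1 z2 : ℝ,
        (z - (z1 + z2) / 2) ^ 2 + ua z1 + ua z2 < ua z + ε ∨
        (z - (z1 + z2) / 2) ^ 2 + ua z1 + uA z2 < ua z + ε := by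
      intro z ε hε
      obtain ⟨z1, z2, hc⟩ := ha3 z ε hε
      rcases hc with h | h
      · exact ⟨z1, z2, Or.inl h⟩
      · refine ⟨z2, z1, Or.inr ?_⟩
        have he : (z - (z1 + z2) / 2) ^ 2 = (z - (z2 + z1) / 2) ^ 2 := by ring
        linarith
    exact conj_eq_aux ua uA zs y ha1 ha2' ha3' hba hbA
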